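/- Let j : J ↪ C be an α-bounded subcategory of arities in a cocomplete V-factegory C (a V-category with an enriched factorization system compatible with that of V, cocomplete with cointersections of E-morphisms). Then every V-endofunctor H : C → C that is a left Kan extension along j is α-bounded. In particular every J-ary V-endofunctor is α-bounded. -/

import Mathlib

/-!
STATEMENT 16 (Proposition `Jarybounded`): let `j : J ↪ C` be an α-bounded
subcategory of arities in a cocomplete `V`-factegory `C` (here `V = Type`, with
a factorization system compatible with that of `C`).  Then every endofunctor
`H : C ⥤ C` that is a left Kan extension along `j` is α-bounded; in particular
every `J`-ary endofunctor is α-bounded.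
-/

open CategoryTheory CategoryTheory.Limits Opposite

universe v u

namespace Stmt16

/-- A (not necessarily proper) factorization system `(E, M)` on a category. -/
structure FS (C : Type u) [Category.{v} C] where
  E : MorphismProperty C
  M : MorphismProperty C
  E_of_iso : ∀ {X Y : C} (f : X ⟶ Y), IsIso f → E f
  M_of_iso : ∀ {X Y : C} (f : X ⟶ Y), IsIso f → M f
  E_comp : ∀ {X Y Z : C} (f : X ⟶ Y) (g : Y ⟶ Z), E f → E g → E (f ≫ g)
  M_comp : ∀ {X Y Z : C} (f : X ⟶ Y) (g : Y ⟶ Z), M f → M g → M (f ≫ g)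
  fac : ∀ {X Y : C} (f : X ⟶ Y), ∃ (Z : C) (e : X ⟶ Z) (m : Z ⟶ Y), E e ∧ M m ∧ e ≫ m = f
  lift : ∀ {A B X Y : C} (e : A ⟶ B) (m : X ⟶ Y), E e → M m →
    ∀ (u : A ⟶ X) (v : B ⟶ Y), u ≫ m = e ≫ v →
      ∃! d : B ⟶ X, e ≫ d = u ∧ d ≫ m = v

variable {J : Type v} [SmallCategory J] {C : Type u} [Category.{v} C]

section
variable [HasColimitsOfSize.{v, v} C]

/-- A category `K` is α-filtered: every diagram in `K` with fewer than `α`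
arrows admits a cocone. -/
def IsAlphaFiltered (α : Cardinal.{v}) (K : Type v) [SmallCategory K] : Prop :=
  ∀ (J' : Type v) (_ : SmallCategory J'), Cardinal.mk (Arrow J') < α →
    ∀ G : J' ⥤ K, Nonempty (Cocone G)

/-- A cocone is an `M`-cocone if all its components lie in `M`. -/
def MCocone {C' : Type*} [Category C'] (F : FS C') {K : Type v} [SmallCategory K]
    {G : K ⥤ C'} (c : Cocone G) : Prop :=
  ∀ k, F.M (c.ι.app k)

/-- A functor between factegories is α-bounded if it preserves the
`E`-tightness of small α-filtered `M`-cocones. -/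
def AlphaBounded {D : Type*} [Category.{v} D] [HasColimitsOfSize.{v, v} D]
    (FC : FS C) (FD : FS D) (α : Cardinal.{v}) (F : C ⥤ D) : Prop :=
  ∀ (K : Type v) (_ : SmallCategory K), IsAlphaFiltered α K →
    ∀ (G : K ⥤ C) (c : Cocone G), MCocone FC c →
      FC.E (colimit.desc G c) →
        FD.E (colimit.desc (G ⋙ F) (F.mapCocone c))

/-- The diagram whose conical colimit computes the `W`-weighted colimit of `D`. -/
def elDiag {B : Type v} [SmallCategory B] (W : Bᵒᵖ ⥤ Type v) {E : Type u} [Category.{v} E]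
    (D : B ⥤ E) : W.Elementsᵒᵖ ⥤ E :=
  (CategoryOfElements.π W).leftOp ⋙ D

/-- The weight `C(j-, X)`. -/
def homWeight (j : J ⥤ C) (X : C) : Jᵒᵖ ⥤ Type v :=
  j.op ⋙ yoneda.obj X

/-- The canonical cocone on the elements diagram of `C(j-, X)` with vertex `X`. -/
@[simps]
def densityCocone (j : J ⥤ C) (X : C) : Cocone (elDiag (homWeight j X) j) where
  pt := X
  ι :=
    { app := fun p => p.unop.2
      naturality := fun p q f => by
        have := f.unop.2
        dsimp [elDiag, homWeight] at this ⊢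
        exact this.trans (Category.comp_id _).symm }

/-- Density of `j`. -/
def Dense (j : J ⥤ C) : Prop :=
  ∀ X : C, Nonempty (IsColimit (densityCocone j X))

/-- `H` is `J`-ary: it preserves `Φ_J`-colimits. -/
def JAry (j : J ⥤ C) (H : C ⥤ C) : Prop :=
  ∀ (X : C) (D : J ⥤ C), PreservesColimit (elDiag (homWeight j X) D) H

/-- A morphism having the unique left lifting property against all of `M` lies in `E`. -/
lemma E_of_llp {C' : Type*} [Category C'] (F : FS C') {X Y : C'} (f : X ⟶ Y)
    (h : ∀ {A B : C'} (m : A ⟶ B), F.M m → ∀ (u : X ⟶ A) (v : Y ⟶ B),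
      u ≫ m = f ≫ v → ∃! d : Y ⟶ A, f ≫ d = u ∧ d ≫ m = v) : F.E f := by
  obtain ⟨Z, e, m, he, hm, hfac⟩ := F.fac f
  obtain ⟨d, ⟨hd1, hd2⟩, -⟩ := h m hm e (𝟙 Y) (by rw [Category.comp_id, hfac])
  obtain ⟨d', hd', hu⟩ := F.lift e m he hm e m rfl
  have h1 : e ≫ 𝟙 Z = e ∧ 𝟙 Z ≫ m = m := ⟨Category.comp_id e, Category.id_comp m⟩
  have h3 : e ≫ (m ≫ d) = e ∧ (m ≫ d) ≫ m = m := by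
    constructor
    · rw [← Category.assoc, hfac, hd1]
    · rw [Category.assoc, hd2, Category.comp_id]
  have hmd : m ≫ d = 𝟙 Z := (hu _ h3).trans (hu _ h1).symm
  have : IsIso m := ⟨d, hmd, hd2⟩
  rw [← hfac]
  exact F.E_comp e m he (F.E_of_iso m this)

/-- The key lemma: an endofunctor `H` admitting a "pointwise left Kan extension
presentation" `(D, η)` along `j` is α-bounded. -/
lemma key (j : J ⥤ C) (FC : FS C) (F0 : FS (Type v)) (α : Cardinal.{v})
    (hcompat : ∀ (X : C) {A B : C} (m : A ⟶ B), FC.M m →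
      F0.M ((coyoneda.obj (op X)).map m))
    (hbdd : ∀ A : J, AlphaBounded FC F0 α (coyoneda.obj (op (j.obj A))))
    (H : C ⥤ C) (D : J ⥤ C) (η : D ⟶ j ⋙ H)
    (hcolim : ∀ (X Z : C) (φ : ∀ (A' : J), (j.obj A' ⟶ X) → (D.obj A' ⟶ Z)),
      (∀ (A₁ A₂ : J) (t : A₂ ⟶ A₁) (f : j.obj A₁ ⟶ X),
        φ A₂ (j.map t ≫ f) = D.map t ≫ φ A₁ f) →
      ∃! d : H.obj X ⟶ Z, ∀ (A' : J) (f : j.obj A' ⟶ X),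
        (η.app A' ≫ H.map f) ≫ d = φ A' f) :
    AlphaBounded FC FC α H := by
  intro K instK hK G c hMc hE
  set e : colimit (G ⋙ H) ⟶ H.obj c.pt := colimit.desc (G ⋙ H) (H.mapCocone c) with he_def
  have hιe : ∀ k : K, colimit.ι (G ⋙ H) k ≫ e = H.map (c.ι.app k) := fun k =>
    colimit.ι_desc (H.mapCocone c) k
  apply E_of_llp
  intro A B m hm u v hsq
  -- the tight `Type`-level comparison maps
  have hE' : ∀ A' : J, F0.E (colimit.desc (G ⋙ coyoneda.obj (op (j.obj A')))
      ((coyoneda.obj (op (j.obj A'))).mapCocone c)) := fun A' =>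
    hbdd A' K instK hK G c hMc hE
  set e' : ∀ A' : J, colimit (G ⋙ coyoneda.obj (op (j.obj A'))) ⟶ (j.obj A' ⟶ c.pt) :=
    fun A' => colimit.desc (G ⋙ coyoneda.obj (op (j.obj A')))
      ((coyoneda.obj (op (j.obj A'))).mapCocone c) with he'_def
  have hιe' : ∀ (A' : J) (k : K) (g : j.obj A' ⟶ G.obj k),
      e' A' (colimit.ι (G ⋙ coyoneda.obj (op (j.obj A'))) k g) = g ≫ c.ι.app k :=
    fun A' k g => ConcreteCategory.congr_hom (colimit.ι_desc ((coyoneda.obj (op (j.obj A'))).mapCocone c) k) g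
  -- the cocones defining `u' A'`
  let uc : ∀ A' : J, Cocone (G ⋙ coyoneda.obj (op (j.obj A'))) := fun A' =>
    { pt := D.obj A' ⟶ A
      ι :=
        { app := fun k => TypeCat.ofHom (fun g => (η.app A' ≫ H.map g) ≫ colimit.ι (G ⋙ H) k ≫ u)
          naturality := by
            intro k k' h
            ext g
            have hw : colimit.ι (G ⋙ H) k = (G ⋙ H).map h ≫ colimit.ι (G ⋙ H) k' :=
              (colimit.w (G ⋙ H) h).symm
            simp only [Functor.comp_obj, Functor.comp_map,
              types_comp_apply, Functor.const_obj_obj, Functor.const_obj_map, types_id_apply]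
            rw [hw]
            simp [Category.assoc] } }
  set u' : ∀ A' : J, colimit (G ⋙ coyoneda.obj (op (j.obj A'))) ⟶ (D.obj A' ⟶ A) :=
    fun A' => colimit.desc _ (uc A') with hu'_def
  have hιu' : ∀ (A' : J) (k : K) (g : j.obj A' ⟶ G.obj k),
      u' A' (colimit.ι (G ⋙ coyoneda.obj (op (j.obj A'))) k g)
        = (η.app A' ≫ H.map g) ≫ colimit.ι (G ⋙ H) k ≫ u :=
    fun A' k g => ConcreteCategory.congr_hom (colimit.ι_desc (uc A') k) g
  set v' : ∀ A' : J, (j.obj A' ⟶ c.pt) ⟶ (D.obj A' ⟶ B) :=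
    fun A' => TypeCat.ofHom (fun f => (η.app A' ≫ H.map f) ≫ v) with hv'_def
  -- the square for the lifting problems
  have hsq' : ∀ A' : J, u' A' ≫ (coyoneda.obj (op (D.obj A'))).map m = e' A' ≫ v' A' := by
    intro A'
    apply colimit.hom_ext
    intro k
    ext g
    show u' A' (colimit.ι (G ⋙ coyoneda.obj (op (j.obj A'))) k g) ≫ m
      = v' A' (e' A' (colimit.ι (G ⋙ coyoneda.obj (op (j.obj A'))) k g))
    rw [hιu', hιe']
    show ((η.app A' ≫ H.map g) ≫ colimit.ι (G ⋙ H) k ≫ u) ≫ m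
      = (η.app A' ≫ H.map (g ≫ c.ι.app k)) ≫ v
    rw [H.map_comp, ← hιe k]
    simp only [Category.assoc]
    rw [← hsq]
  -- the lifts `δ A'`
  have hlift : ∀ A' : J, ∃! δ : (j.obj A' ⟶ c.pt) ⟶ (D.obj A' ⟶ A),
      e' A' ≫ δ = u' A' ∧ δ ≫ (coyoneda.obj (op (D.obj A'))).map m = v' A' :=
    fun A' => F0.lift (e' A') ((coyoneda.obj (op (D.obj A'))).map m)
      (hE' A') (hcompat _ _ hm) (u' A') (v' A') (hsq' A')
  set δ : ∀ A' : J, (j.obj A' ⟶ c.pt) ⟶ (D.obj A' ⟶ A) :=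
    fun A' => (hlift A').choose with hδ_def
  have hδ : ∀ A' : J, e' A' ≫ δ A' = u' A' ∧
      δ A' ≫ (coyoneda.obj (op (D.obj A'))).map m = v' A' :=
    fun A' => (hlift A').choose_spec.1
  have hδuniq : ∀ (A' : J) (δ₀ : (j.obj A' ⟶ c.pt) ⟶ (D.obj A' ⟶ A)),
      (e' A' ≫ δ₀ = u' A' ∧ δ₀ ≫ (coyoneda.obj (op (D.obj A'))).map m = v' A') →
      δ₀ = δ A' := fun A' δ₀ h₀ => (hlift A').choose_spec.2 δ₀ h₀
  have hδe : ∀ (A' : J) (k : K) (g : j.obj A' ⟶ G.obj k),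
      δ A' (g ≫ c.ι.app k) = (η.app A' ≫ H.map g) ≫ colimit.ι (G ⋙ H) k ≫ u := by
    intro A' k g
    have h1 := ConcreteCategory.congr_hom (hδ A').1 (colimit.ι (G ⋙ coyoneda.obj (op (j.obj A'))) k g)
    simp only [types_comp_apply] at h1
    rw [hιe'] at h1
    rw [h1, hιu']
  have hδm : ∀ (A' : J) (f : j.obj A' ⟶ c.pt),
      δ A' f ≫ m = (η.app A' ≫ H.map f) ≫ v := by
    intro A' f
    exact ConcreteCategory.congr_hom (hδ A').2 f
  -- compatibility of `δ` in `A'`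
  have hcpt : ∀ (A₁ A₂ : J) (t : A₂ ⟶ A₁) (f : j.obj A₁ ⟶ c.pt),
      δ A₂ (j.map t ≫ f) = D.map t ≫ δ A₁ f := by
    intro A₁ A₂ t f
    have hηt : ∀ {W : C} (g : j.obj A₁ ⟶ W),
        D.map t ≫ η.app A₁ ≫ H.map g = η.app A₂ ≫ H.map (j.map t ≫ g) := by
      intro W g
      rw [H.map_comp, ← Category.assoc, ← Category.assoc]
      congr 1
      exact η.naturality t
    -- the common lifting problem
    set u'' : colimit (G ⋙ coyoneda.obj (op (j.obj A₁))) ⟶ (D.obj A₂ ⟶ A) :=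
      u' A₁ ≫ TypeCat.ofHom (fun h => D.map t ≫ h) with hu''_def
    set v'' : (j.obj A₁ ⟶ c.pt) ⟶ (D.obj A₂ ⟶ B) :=
      TypeCat.ofHom (fun f => D.map t ≫ v' A₁ f) with hv''_def
    have hF₂ : e' A₁ ≫ TypeCat.ofHom (fun f => D.map t ≫ δ A₁ f) = u'' ∧
        TypeCat.ofHom (fun f => D.map t ≫ δ A₁ f) ≫ (coyoneda.obj (op (D.obj A₂))).map m = v'' := by
      constructor
      · refine ConcreteCategory.hom_ext _ _ fun x => ?_
        show D.map t ≫ δ A₁ (e' A₁ x) = D.map t ≫ u' A₁ x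
        rw [← types_comp_apply (e' A₁) (δ A₁) x, (hδ A₁).1]
      · ext f
        show (D.map t ≫ δ A₁ f) ≫ m = D.map t ≫ v' A₁ f
        rw [Category.assoc, hδm]
        rfl
    have hF₁ : e' A₁ ≫ TypeCat.ofHom (fun f => δ A₂ (j.map t ≫ f)) = u'' ∧
        TypeCat.ofHom (fun f => δ A₂ (j.map t ≫ f)) ≫ (coyoneda.obj (op (D.obj A₂))).map m = v'' := by
      constructor
      · apply colimit.hom_ext
        intro k
        ext g
        show δ A₂ (j.map t ≫ e' A₁ (colimit.ι (G ⋙ coyoneda.obj (op (j.obj A₁))) k g))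
          = D.map t ≫ u' A₁ (colimit.ι (G ⋙ coyoneda.obj (op (j.obj A₁))) k g)
        rw [hιe', hιu', ← Category.assoc (j.map t) g (c.ι.app k), hδe]
        rw [← Category.assoc (D.map t), hηt]
      · ext f
        show δ A₂ (j.map t ≫ f) ≫ m = D.map t ≫ v' A₁ f
        rw [hδm]
        show (η.app A₂ ≫ H.map (j.map t ≫ f)) ≫ v = D.map t ≫ (η.app A₁ ≫ H.map f) ≫ v
        rw [← Category.assoc (D.map t), hηt]
    have hsq'' : u'' ≫ (coyoneda.obj (op (D.obj A₂))).map m = e' A₁ ≫ v'' := by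
      rw [← hF₂.1, Category.assoc, hF₂.2]
    have huniq := F0.lift (e' A₁) ((coyoneda.obj (op (D.obj A₂))).map m)
      (hE' A₁) (hcompat _ _ hm) u'' v'' hsq''
    exact ConcreteCategory.congr_hom (huniq.unique hF₁ hF₂) f
  -- the diagonal `d`
  obtain ⟨d, hd, hdu⟩ := hcolim c.pt A (fun A' f => δ A' f) hcpt
  have hed : e ≫ d = u := by
    apply colimit.hom_ext
    intro k
    rw [← Category.assoc, hιe k]
    -- joint epimorphicity at `G.obj k`
    set ψ : ∀ (A' : J), (j.obj A' ⟶ G.obj k) → (D.obj A' ⟶ A) :=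
      fun A' g => (η.app A' ≫ H.map g) ≫ colimit.ι (G ⋙ H) k ≫ u with hψ_def
    have hψc : ∀ (A₁ A₂ : J) (t : A₂ ⟶ A₁) (g : j.obj A₁ ⟶ G.obj k),
        ψ A₂ (j.map t ≫ g) = D.map t ≫ ψ A₁ g := by
      intro A₁ A₂ t g
      show (η.app A₂ ≫ H.map (j.map t ≫ g)) ≫ _ = D.map t ≫ (η.app A₁ ≫ H.map g) ≫ _
      rw [← Category.assoc (D.map t)]
      congr 1
      rw [H.map_comp, ← Category.assoc, ← Category.assoc]
      congr 1
      exact (η.naturality t).symm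
    obtain ⟨dk, hdk, hdku⟩ := hcolim (G.obj k) A ψ hψc
    have h1 : H.map (c.ι.app k) ≫ d = dk := by
      apply hdku
      intro A' g
      rw [← Category.assoc, Category.assoc (η.app A'), ← H.map_comp, hd A' (g ≫ c.ι.app k),
        hδe]
    have h2 : colimit.ι (G ⋙ H) k ≫ u = dk := by
      apply hdku
      intro A' g
      rfl
    rw [h1, h2]
  refine ⟨d, ⟨hed, ?_⟩, ?_⟩
  · -- `d ≫ m = v`, by joint epimorphicity at `c.pt`
    set ψ : ∀ (A' : J), (j.obj A' ⟶ c.pt) → (D.obj A' ⟶ B) :=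
      fun A' f => (η.app A' ≫ H.map f) ≫ v with hψ_def
    have hψc : ∀ (A₁ A₂ : J) (t : A₂ ⟶ A₁) (f : j.obj A₁ ⟶ c.pt),
        ψ A₂ (j.map t ≫ f) = D.map t ≫ ψ A₁ f := by
      intro A₁ A₂ t f
      show (η.app A₂ ≫ H.map (j.map t ≫ f)) ≫ v = D.map t ≫ (η.app A₁ ≫ H.map f) ≫ v
      rw [← Category.assoc (D.map t)]
      congr 1
      rw [H.map_comp, ← Category.assoc, ← Category.assoc]
      congr 1
      exact (η.naturality t).symm
    obtain ⟨dv, hdv, hdvu⟩ := hcolim c.pt B ψ hψc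
    have h1 : d ≫ m = dv := by
      apply hdvu
      intro A' f
      rw [← Category.assoc, hd A' f, hδm]
    have h2 : v = dv := by
      apply hdvu
      intro A' f
      rfl
    rw [h1, h2]
  · -- uniqueness
    rintro d₀ ⟨h1, h2⟩
    apply hdu
    intro A' f
    have hF₀ : e' A' ≫ TypeCat.ofHom (fun f => (η.app A' ≫ H.map f) ≫ d₀) = u' A' ∧
        TypeCat.ofHom (fun f => (η.app A' ≫ H.map f) ≫ d₀) ≫ (coyoneda.obj (op (D.obj A'))).map m
          = v' A' := by
      constructor
      · apply colimit.hom_ext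
        intro k
        ext g
        show (η.app A' ≫ H.map (e' A' (colimit.ι (G ⋙ coyoneda.obj (op (j.obj A'))) k g))) ≫ d₀
          = u' A' (colimit.ι (G ⋙ coyoneda.obj (op (j.obj A'))) k g)
        rw [hιe', hιu', H.map_comp, ← hιe k]
        simp only [Category.assoc]
        rw [h1]
      · ext f
        show ((η.app A' ≫ H.map f) ≫ d₀) ≫ m = (η.app A' ≫ H.map f) ≫ v
        rw [Category.assoc, h2]
    exact ConcreteCategory.congr_hom (hδuniq A' _ hF₀) f

/-- The pointwise formula holds for any left Kan extension. -/
lemma hcolim_of_leftKan (j : J ⥤ C) (H : C ⥤ C) (D : J ⥤ C) (η : D ⟶ j ⋙ H)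
    [H.IsLeftKanExtension η] :
    ∀ (X Z : C) (φ : ∀ (A' : J), (j.obj A' ⟶ X) → (D.obj A' ⟶ Z)),
      (∀ (A₁ A₂ : J) (t : A₂ ⟶ A₁) (f : j.obj A₁ ⟶ X),
        φ A₂ (j.map t ≫ f) = D.map t ≫ φ A₁ f) →
      ∃! d : H.obj X ⟶ Z, ∀ (A' : J) (f : j.obj A' ⟶ X),
        (η.app A' ≫ H.map f) ≫ d = φ A' f := by
  have hpt : (Functor.LeftExtension.mk H η).IsPointwiseLeftKanExtension :=
    Functor.isPointwiseLeftKanExtensionOfIsLeftKanExtension H η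
  intro X Z φ hφ
  have hc : IsColimit ((Functor.LeftExtension.mk H η).coconeAt X) := hpt X
  let s : Cocone (CostructuredArrow.proj j X ⋙ D) :=
    { pt := Z
      ι :=
        { app := fun g => φ g.left g.hom
          naturality := by
            intro g₁ g₂ ψ
            have hw : j.map ψ.left ≫ g₂.hom = g₁.hom := CostructuredArrow.w ψ
            have h := hφ g₂.left g₁.left ψ.left g₂.hom
            rw [hw] at h
            exact h.symm.trans (Category.comp_id _).symm } }
  refine ⟨hc.desc s, ?_, ?_⟩
  · intro A' f
    have := hc.fac s (CostructuredArrow.mk f)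
    exact this
  · intro d₀ h₀
    apply hc.uniq s d₀
    intro g
    have := h₀ g.left g.hom
    exact this

/-- The pointwise formula holds for `J`-ary endofunctors, with `D := j ⋙ H`. -/
lemma hcolim_of_jary (j : J ⥤ C) (hd : Dense j) (H : C ⥤ C) (hH : JAry j H) :
    ∀ (X Z : C) (φ : ∀ (A' : J), (j.obj A' ⟶ X) → ((j ⋙ H).obj A' ⟶ Z)),
      (∀ (A₁ A₂ : J) (t : A₂ ⟶ A₁) (f : j.obj A₁ ⟶ X),
        φ A₂ (j.map t ≫ f) = (j ⋙ H).map t ≫ φ A₁ f) →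
      ∃! d : H.obj X ⟶ Z, ∀ (A' : J) (f : j.obj A' ⟶ X),
        (NatTrans.app (𝟙 (j ⋙ H)) A' ≫ H.map f) ≫ d = φ A' f := by
  intro X Z φ hφ
  have := hH X j
  have hc : IsColimit (H.mapCocone (densityCocone j X)) :=
    isColimitOfPreserves H (hd X).some
  let s : Cocone (elDiag (homWeight j X) j ⋙ H) :=
    { pt := Z
      ι :=
        { app := fun p => φ p.unop.1.unop p.unop.2
          naturality := by
            intro p q f
            have h2 : j.map f.unop.1.unop ≫ q.unop.2 = p.unop.2 := f.unop.2
            have h := hφ q.unop.1.unop p.unop.1.unop f.unop.1.unop q.unop.2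
            rw [h2] at h
            dsimp [elDiag, homWeight]
            exact h.symm.trans (Category.comp_id _).symm } }
  refine ⟨hc.desc s, ?_, ?_⟩
  · intro A' f
    have := hc.fac s (op ⟨op A', f⟩)
    simp only [NatTrans.id_app, Category.id_comp]
    exact this
  · intro d₀ h₀
    apply hc.uniq s d₀
    intro p
    have := h₀ p.unop.1.unop p.unop.2
    simp only [NatTrans.id_app, Category.id_comp] at this
    exact this

theorem stmt16 (j : J ⥤ C) [j.Full] [j.Faithful] (hd : Dense j)
    (FC : FS C) (F0 : FS (Type v)) (α : Cardinal.{v}) (hα : α.IsRegular)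
    (hcompat : ∀ (X : C) {A B : C} (m : A ⟶ B), FC.M m →
      F0.M ((coyoneda.obj (op X)).map m))
    (hcoint : ∀ (I : Type v) (X : C) (Y : I → C) (e : ∀ i, X ⟶ Y i),
      (∀ i, FC.E (e i)) → HasWidePushout X Y e)
    (hbdd : ∀ A : J, AlphaBounded FC F0 α (coyoneda.obj (op (j.obj A)))) :
    (∀ H : C ⥤ C, (∃ (D : J ⥤ C) (η : D ⟶ j ⋙ H), H.IsLeftKanExtension η) →
        AlphaBounded FC FC α H) ∧
      (∀ H : C ⥤ C, JAry j H → AlphaBounded FC FC α H) := by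
  constructor
  · rintro H ⟨D, η, hkan⟩
    exact key j FC F0 α hcompat hbdd H D η (hcolim_of_leftKan j H D η)
  · intro H hH
    exact key j FC F0 α hcompat hbdd H (j ⋙ H) (𝟙 (j ⋙ H)) (hcolim_of_jary j hd H hH)

end

end Stmt16
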